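/- Let n ≥ 3 be an integer, ℓ > 0, r₊ > 0, Λ < 0, and a, c, d ∈ ℝ. Suppose c·r + d > 0 for all r > r₊ and that the identity −(c·r/(c·r + d))·(n + a/r^{n−1}) = 2Λℓ²/(n−1) holds for all r > r₊. Then a = 0, d = 0, Λ = −n(n−1)/(2ℓ²), and c > 0. -/
import Mathlib


/-- if cr + d > 0 on (r₊,∞) and
−(cr/(cr+d))(n + a/r^{n−1}) = 2Λℓ²/(n−1) for all r > r₊ (with Λ < 0),
then a = 0, d = 0, Λ = −n(n−1)/(2ℓ²) and c > 0. -/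
theorem stmt_10 (n : ℕ) (hn : 3 ≤ n) (ℓ : ℝ) (hℓ : 0 < ℓ) (rp : ℝ) (hrp : 0 < rp)
    (Λ : ℝ) (hΛ : Λ < 0) (a c d : ℝ)
    (hpos : ∀ r > rp, 0 < c * r + d)
    (hid : ∀ r > rp,
      -(c * r / (c * r + d)) * ((n : ℝ) + a / r ^ (n - 1))
        = 2 * Λ * ℓ ^ 2 / ((n : ℝ) - 1)) :
    a = 0 ∧ d = 0 ∧ Λ = -((n : ℝ) * ((n : ℝ) - 1)) / (2 * ℓ ^ 2) ∧ 0 < c := by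
  obtain ⟨m, rfl⟩ : ∃ m, n = m + 3 := ⟨n - 3, by omega⟩
  set K : ℝ := 2 * Λ * ℓ ^ 2 / ((m : ℝ) + 2) with hKdef
  have hm2 : ((m : ℝ) + 2) ≠ 0 := by positivity
  have hKneg : K < 0 := by
    rw [hKdef]
    apply div_neg_of_neg_of_pos
    · have h2 : (0:ℝ) < ℓ ^ 2 := by positivity
      nlinarith
    · positivity
  set A : ℝ := c * (((m : ℝ) + 3) + K) with hA
  set B : ℝ := K * d with hB
  set Cc : ℝ := c * a with hC
  have key : ∀ r > rp, A * r ^ (m + 3) + B * r ^ (m + 2) + Cc * r = 0 := by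
    intro r hr
    have h := hid r hr
    have hr0 : (0:ℝ) < r := hrp.trans hr
    have hcd : c * r + d ≠ 0 := ne_of_gt (hpos r hr)
    have hcast : ((m + 3 : ℕ) : ℝ) = (m : ℝ) + 3 := by push_cast; ring
    have hsub : (m + 3) - 1 = m + 2 := by omega
    rw [hsub, hcast] at h
    have hK' : 2 * Λ * ℓ ^ 2 / ((m : ℝ) + 3 - 1) = K := by
      rw [hKdef]; ring_nf
    rw [hK'] at h
    have hrp0 : r ^ (m + 2) ≠ 0 := by positivity
    field_simp at h
    have h3 : r ^ (m + 3) = r ^ (m + 2) * r := by ring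
    rw [hA, hB, hC, h3]
    nlinarith [h]
  -- build polynomial
  set p : Polynomial ℝ :=
    Polynomial.C A * Polynomial.X ^ (m + 3) + Polynomial.C B * Polynomial.X ^ (m + 2)
      + Polynomial.C Cc * Polynomial.X with hp
  have hproot : ∀ r > rp, p.IsRoot r := by
    intro r hr
    simp [hp, Polynomial.IsRoot, Polynomial.eval_add, Polynomial.eval_mul]
    have := key r hr
    linarith [this]
  have hp0 : p = 0 := by
    apply Polynomial.eq_zero_of_infinite_isRoot
    apply Set.Infinite.mono _ (Set.Ioi_infinite rp)
    intro r hr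
    exact hproot r hr
  have hA0 : A = 0 := by
    have := congrArg (fun q => Polynomial.coeff q (m + 3)) hp0
    simpa [hp, Polynomial.coeff_X_pow, Polynomial.coeff_X, Nat.succ_ne_self] using this
  have hB0 : B = 0 := by
    have := congrArg (fun q => Polynomial.coeff q (m + 2)) hp0
    simpa [hp, Polynomial.coeff_X_pow, Polynomial.coeff_X] using this
  have hC0 : Cc = 0 := by
    have := congrArg (fun q => Polynomial.coeff q 1) hp0
    simpa [hp, Polynomial.coeff_X_pow, Polynomial.coeff_X] using this
  have hKne : K ≠ 0 := ne_of_lt hKneg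
  have hd : d = 0 := by
    rcases mul_eq_zero.mp hB0 with h | h
    · exact absurd h hKne
    · exact h
  have hc : 0 < c := by
    have := hpos (rp + 1) (by linarith)
    rw [hd] at this
    nlinarith
  have hcne : c ≠ 0 := ne_of_gt hc
  have ha : a = 0 := by
    rcases mul_eq_zero.mp hC0 with h | h
    · exact absurd h hcne
    · exact h
  have hKval : K = -((m : ℝ) + 3) := by
    rcases mul_eq_zero.mp hA0 with h | h
    · exact absurd h hcne
    · linarith
  have hΛval : Λ = -(((m : ℝ) + 3) * (((m : ℝ) + 3) - 1)) / (2 * ℓ ^ 2) := by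
    have h1 : 2 * Λ * ℓ ^ 2 = K * ((m : ℝ) + 2) := by
      rw [hKdef]; field_simp
    rw [hKval] at h1
    have hℓ2 : ℓ ^ 2 ≠ 0 := by positivity
    field_simp
    nlinarith [h1]
  refine ⟨ha, hd, ?_, hc⟩
  push_cast
  convert hΛval using 3
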